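/- For every ε > 0 there exists a constant C_ε > 0 such that for every X > 0 and every α ∈ ℝ: ∑_{ℓ=1}^∞ ℓ^{ε−1} · 𝔐¹_{ℓα}(X/ℓ) ≤ C_ε · 𝔐_α^{1,2ε}(X). -/

import Mathlib

open Real
open scoped ENNReal

noncomputable section

/-- `⟨x⟩`, the distance from `x` to the nearest integer. -/
def nint (x : ℝ) : ℝ := |x - (round x : ℝ)|

/-- `log⁺(t) = max(0, log t)`. -/
def logp (t : ℝ) : ℝ := max 0 (Real.log t)

/-- `𝔐_α^{1,ε}(X) = ∑_{n≥1} n^ε min(X/n², 1/(n⟨nα⟩)) (1 + log⁺(X⟨nα⟩/n))`,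
computed in `[0,∞]` (a term with `⟨nα⟩ = 0` being read as `n^ε X/n²`). -/
def frakM1E (α X ε : ℝ) : ℝ≥0∞ :=
  ∑' n : ℕ+, ENNReal.ofReal (((n : ℕ) : ℝ) ^ ε *
    (if nint (((n : ℕ) : ℝ) * α) = 0 then X / ((n : ℕ) : ℝ) ^ 2
     else min (X / ((n : ℕ) : ℝ) ^ 2)
       (1 / (((n : ℕ) : ℝ) * nint (((n : ℕ) : ℝ) * α)))) *
    (1 + logp (X * nint (((n : ℕ) : ℝ) * α) / ((n : ℕ) : ℝ))))

-- per-exponent bound: a+1 ≤ B * 2^(aε)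
lemma aux_aplus (ε : ℝ) (hε : 0 < ε) :
    ∃ B : ℝ, 1 ≤ B ∧ ∀ a : ℕ, (a + 1 : ℝ) ≤ B * (2 : ℝ) ^ ((a : ℝ) * ε) := by
  set s : ℝ := ε * Real.log 2 with hs
  have hs0 : 0 < s := mul_pos hε (Real.log_pos one_lt_two)
  refine ⟨Real.exp (s - 1 - Real.log s), ?_, ?_⟩
  · apply Real.one_le_exp
    have := Real.log_le_sub_one_of_pos hs0
    linarith
  · intro a
    have hx : (0:ℝ) < ((a:ℝ) + 1) * s := by positivity
    have h1 : Real.log (((a:ℝ) + 1) * s) ≤ ((a:ℝ) + 1) * s - 1 :=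
      Real.log_le_sub_one_of_pos hx
    have h2 : Real.log ((a:ℝ) + 1) + Real.log s ≤ ((a:ℝ) + 1) * s - 1 := by
      rwa [← Real.log_mul (by positivity) (ne_of_gt hs0)]
    have h3 : (a + 1 : ℝ) = Real.exp (Real.log ((a:ℝ)+1)) := by
      rw [Real.exp_log (by positivity)]
    rw [h3, show (2:ℝ) ^ ((a:ℝ) * ε) = Real.exp (Real.log 2 * ((a:ℝ) * ε)) from
        Real.rpow_def_of_pos (by norm_num) _, ← Real.exp_add]
    · apply Real.exp_le_exp.2
      have : Real.log ((a:ℝ)+1) ≤ (s - 1 - Real.log s) + (a:ℝ) * s := by nlinarith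
      calc Real.log ((a:ℝ)+1) ≤ (s - 1 - Real.log s) + (a:ℝ) * s := this
        _ = (s - 1 - Real.log s) + Real.log 2 * ((a:ℝ) * ε) := by rw [hs]; ring

lemma aux_card_divisors (ε : ℝ) (hε : 0 < ε) :
    ∃ C : ℝ, 1 ≤ C ∧ ∀ m : ℕ, m ≠ 0 → ((m.divisors.card : ℝ)) ≤ C * (m : ℝ) ^ ε := by
  obtain ⟨B, hB1, hB⟩ := aux_aplus ε hε
  set K : ℕ := ⌈(2:ℝ) ^ (1/ε)⌉₊ with hK
  refine ⟨B ^ (K + 1), one_le_pow₀ hB1, ?_⟩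
  intro m hm
  have hcard : (m.divisors.card : ℝ) =
      ∏ p ∈ m.primeFactors, ((m.factorization p : ℝ) + 1) := by
    rw [Nat.card_divisors hm]
    push_cast
    rfl
  -- key per-prime bound
  have key : ∀ p ∈ m.primeFactors,
      ((m.factorization p : ℝ) + 1) ≤
        (if p ≤ K then B else 1) * (p : ℝ) ^ ((m.factorization p : ℝ) * ε) := by
    intro p hp
    have hpp : p.Prime := Nat.prime_of_mem_primeFactors hp
    have hp2 : (2:ℝ) ≤ (p:ℝ) := by exact_mod_cast hpp.two_le
    set a := m.factorization p
    by_cases hcase : p ≤ K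
    · simp only [hcase, if_true]
      calc ((a:ℝ) + 1) ≤ B * (2:ℝ) ^ ((a:ℝ) * ε) := hB a
        _ ≤ B * (p:ℝ) ^ ((a:ℝ) * ε) := by
            apply mul_le_mul_of_nonneg_left _ (le_trans zero_le_one hB1)
            exact Real.rpow_le_rpow (by norm_num) hp2 (by positivity)
    · simp only [hcase, if_false, one_mul]
      push_neg at hcase
      have hpK : (2:ℝ) ^ (1/ε) ≤ (p:ℝ) := by
        calc (2:ℝ) ^ (1/ε) ≤ (K : ℝ) := Nat.le_ceil _
          _ ≤ (p : ℝ) := by exact_mod_cast hcase.le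
      have h2p : (2:ℝ) ≤ (p:ℝ) ^ ε := by
        calc (2:ℝ) = ((2:ℝ) ^ (1/ε)) ^ ε := by
              rw [← Real.rpow_mul (by norm_num), one_div, inv_mul_cancel₀ (ne_of_gt hε),
                Real.rpow_one]
          _ ≤ (p:ℝ) ^ ε := Real.rpow_le_rpow (by positivity) hpK hε.le
      have hnat : (a:ℝ) + 1 ≤ (2:ℝ) ^ a := by
        have : a < 2 ^ a := Nat.lt_two_pow_self
        have : (a:ℝ) + 1 ≤ ((2:ℕ) ^ a : ℕ) := by exact_mod_cast this
        simpa using this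
      calc ((a:ℝ) + 1) ≤ (2:ℝ) ^ a := hnat
        _ ≤ ((p:ℝ) ^ ε) ^ a := pow_le_pow_left₀ (by norm_num) h2p a
        _ = (p:ℝ) ^ ((a:ℝ) * ε) := by
            rw [← Real.rpow_natCast ((p:ℝ) ^ ε) a, ← Real.rpow_mul (by positivity), mul_comm]
  have hprod : ∏ p ∈ m.primeFactors, (p : ℝ) ^ ((m.factorization p : ℝ) * ε)
      = (m : ℝ) ^ ε := by
    have : ∀ p ∈ m.primeFactors, (p : ℝ) ^ ((m.factorization p : ℝ) * ε)
        = ((p : ℝ) ^ (m.factorization p : ℕ)) ^ ε := by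
      intro p hp
      rw [← Real.rpow_natCast (p:ℝ) (m.factorization p), ← Real.rpow_mul (by positivity)]
    rw [Finset.prod_congr rfl this, Real.finset_prod_rpow _ _ (fun p hp => by positivity)]
    congr 1
    have := Nat.factorization_prod_pow_eq_self hm
    calc ∏ p ∈ m.primeFactors, (p : ℝ) ^ (m.factorization p : ℕ)
        = ((∏ p ∈ m.primeFactors, p ^ m.factorization p : ℕ) : ℝ) := by push_cast; rfl
      _ = (m : ℝ) := by
          have h2 : ∏ p ∈ m.primeFactors, p ^ m.factorization p = m := this
          exact_mod_cast h2
  calc (m.divisors.card : ℝ)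
      = ∏ p ∈ m.primeFactors, ((m.factorization p : ℝ) + 1) := hcard
    _ ≤ ∏ p ∈ m.primeFactors,
          ((if p ≤ K then B else 1) * (p : ℝ) ^ ((m.factorization p : ℝ) * ε)) := by
        apply Finset.prod_le_prod
        · intro p hp; positivity
        · exact key
    _ = (∏ p ∈ m.primeFactors, (if p ≤ K then B else 1)) *
          ∏ p ∈ m.primeFactors, (p : ℝ) ^ ((m.factorization p : ℝ) * ε) := by
        rw [Finset.prod_mul_distrib]
    _ ≤ B ^ (K + 1) * (m : ℝ) ^ ε := by
        rw [hprod]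
        apply mul_le_mul_of_nonneg_right _ (by positivity)
        calc ∏ p ∈ m.primeFactors, (if p ≤ K then B else 1)
            = B ^ (m.primeFactors.filter (· ≤ K)).card := by
              rw [Finset.prod_ite, Finset.prod_const, Finset.prod_const, one_pow, mul_one]
          _ ≤ B ^ (K + 1) := by
              apply pow_le_pow_right₀ hB1
              calc (m.primeFactors.filter (· ≤ K)).card
                  ≤ (Finset.range (K+1)).card := by
                    apply Finset.card_le_card
                    intro p hp
                    simp only [Finset.mem_filter] at hp
                    simp [Nat.lt_succ_iff, hp.2]
                _ = K + 1 := Finset.card_range _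

def tt (α X : ℝ) (m : ℕ+) : ℝ :=
  (if nint (((m : ℕ) : ℝ) * α) = 0 then X / ((m : ℕ) : ℝ) ^ 2
   else min (X / ((m : ℕ) : ℝ) ^ 2)
     (1 / (((m : ℕ) : ℝ) * nint (((m : ℕ) : ℝ) * α)))) *
  (1 + logp (X * nint (((m : ℕ) : ℝ) * α) / ((m : ℕ) : ℝ)))

lemma nint_nonneg (x : ℝ) : 0 ≤ nint x := abs_nonneg _

lemma tt_nonneg (α X : ℝ) (hX : 0 ≤ X) (m : ℕ+) : 0 ≤ tt α X m := by
  unfold tt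
  have hm : (0:ℝ) < ((m : ℕ) : ℝ) := by exact_mod_cast m.pos
  apply mul_nonneg
  · split_ifs with h
    · positivity
    · apply le_min (by positivity)
      have := nint_nonneg (((m : ℕ) : ℝ) * α)
      positivity
  · have : 0 ≤ logp (X * nint (((m : ℕ) : ℝ) * α) / ((m : ℕ) : ℝ)) := le_max_left _ _
    linarith

lemma frakM1E_eq (α X ε : ℝ) :
    frakM1E α X ε = ∑' m : ℕ+, ENNReal.ofReal (((m : ℕ) : ℝ) ^ ε * tt α X m) := by
  unfold frakM1E tt
  exact tsum_congr fun n => by rw [mul_assoc]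

lemma aux_divsum (ε : ℝ) (hε : 0 < ε) :
    ∃ C : ℝ, 0 < C ∧ ∀ m : ℕ, m ≠ 0 →
      ∑ d ∈ m.divisors, ((d : ℝ)) ^ ε ≤ C * (m : ℝ) ^ (2 * ε) := by
  obtain ⟨C₀, hC₀1, hC₀⟩ := aux_card_divisors ε hε
  refine ⟨C₀, lt_of_lt_of_le one_pos hC₀1, ?_⟩
  intro m hm
  have hm0 : (0:ℝ) < (m:ℝ) := by exact_mod_cast Nat.pos_of_ne_zero hm
  calc ∑ d ∈ m.divisors, ((d : ℝ)) ^ ε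
      ≤ ∑ _d ∈ m.divisors, ((m : ℝ)) ^ ε := by
        apply Finset.sum_le_sum
        intro d hd
        apply Real.rpow_le_rpow (by positivity) _ hε.le
        exact_mod_cast Nat.divisor_le hd
    _ = (m.divisors.card : ℝ) * (m : ℝ) ^ ε := by rw [Finset.sum_const, nsmul_eq_mul]
    _ ≤ (C₀ * (m : ℝ) ^ ε) * (m : ℝ) ^ ε := by
        apply mul_le_mul_of_nonneg_right (hC₀ m hm) (by positivity)
    _ = C₀ * (m : ℝ) ^ (2 * ε) := by
        rw [mul_assoc, ← Real.rpow_add hm0]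
        ring_nf

-- rescaling identity for a single (ℓ, n) term
lemma term_rescale (ε X α : ℝ) (ℓ n : ℕ+) :
    ENNReal.ofReal (((ℓ : ℕ) : ℝ) ^ (ε - 1)) * ENNReal.ofReal
      (((n : ℕ) : ℝ) ^ (0:ℝ) *
        (if nint (((n : ℕ) : ℝ) * (((ℓ : ℕ) : ℝ) * α)) = 0
          then X / ((ℓ : ℕ) : ℝ) / ((n : ℕ) : ℝ) ^ 2
         else min (X / ((ℓ : ℕ) : ℝ) / ((n : ℕ) : ℝ) ^ 2)
           (1 / (((n : ℕ) : ℝ) * nint (((n : ℕ) : ℝ) * (((ℓ : ℕ) : ℝ) * α))))) *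
        (1 + logp (X / ((ℓ : ℕ) : ℝ) * nint (((n : ℕ) : ℝ) * (((ℓ : ℕ) : ℝ) * α)) /
          ((n : ℕ) : ℝ)))) =
    ENNReal.ofReal (((ℓ : ℕ) : ℝ) ^ ε * tt α X (ℓ * n)) := by
  have hL : (0:ℝ) < ((ℓ : ℕ) : ℝ) := by exact_mod_cast ℓ.pos
  have hN : (0:ℝ) < ((n : ℕ) : ℝ) := by exact_mod_cast n.pos
  set L : ℝ := ((ℓ : ℕ) : ℝ)
  set N : ℝ := ((n : ℕ) : ℝ)
  have hM : (((ℓ * n : ℕ+) : ℕ) : ℝ) = L * N := by push_cast; ring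
  have harg : ((((ℓ * n : ℕ+) : ℕ) : ℝ)) * α = N * (L * α) := by rw [hM]; ring
  rw [← ENNReal.ofReal_mul (by positivity)]
  congr 1
  unfold tt
  rw [harg, hM, Real.rpow_zero, one_mul]
  set d : ℝ := nint (N * (L * α))
  have hlog : X / L * d / N = X * d / (L * N) := by field_simp; all_goals ring
  rw [hlog]
  have hrp : L ^ (ε - 1) * L = L ^ ε := by
    rw [show L ^ ε = L ^ (ε - 1 + 1) by ring_nf, Real.rpow_add_one hL.ne']
  split_ifs with h
  · rw [show X / L / N ^ 2 = L * (X / (L * N) ^ 2) by field_simp; all_goals ring]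
    calc L ^ (ε - 1) * (L * (X / (L * N) ^ 2) * (1 + logp (X * d / (L * N))))
        = (L ^ (ε - 1) * L) * (X / (L * N) ^ 2 * (1 + logp (X * d / (L * N)))) := by ring
      _ = L ^ ε * (X / (L * N) ^ 2 * (1 + logp (X * d / (L * N)))) := by rw [hrp]
  · have hd : d ≠ 0 := h
    have hmin : min (X / L / N ^ 2) (1 / (N * d)) =
        L * min (X / (L * N) ^ 2) (1 / (L * N * d)) := by
      rw [mul_min_of_nonneg _ _ hL.le]
      congr 1
      · field_simp; all_goals ring
      · field_simp; all_goals ring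
    rw [hmin]
    calc L ^ (ε - 1) * (L * min (X / (L * N) ^ 2) (1 / (L * N * d)) *
            (1 + logp (X * d / (L * N))))
        = (L ^ (ε - 1) * L) * (min (X / (L * N) ^ 2) (1 / (L * N * d)) *
            (1 + logp (X * d / (L * N)))) := by ring
      _ = L ^ ε * (min (X / (L * N) ^ 2) (1 / (L * N * d)) *
            (1 + logp (X * d / (L * N)))) := by rw [hrp]

/-- **Lemma 8.7.** `∑_{ℓ≥1} ℓ^{ε-1} 𝔐¹_{ℓα}(X/ℓ) ≤ C_ε 𝔐_α^{1,2ε}(X)`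
(where `𝔐¹_α = 𝔐_α^{1,0}`), the sums being computed in `[0,∞]`. -/
theorem frakM1_rescaled_sum_bound (ε : ℝ) (hε : 0 < ε) :
    ∃ C : ℝ, 0 < C ∧ ∀ X α : ℝ, 0 < X →
      (∑' l : ℕ+, ENNReal.ofReal (((l : ℕ) : ℝ) ^ (ε - 1)) *
          frakM1E (((l : ℕ) : ℝ) * α) (X / ((l : ℕ) : ℝ)) 0) ≤
        ENNReal.ofReal C * frakM1E α X (2 * ε) := by
  obtain ⟨C, hC0, hC⟩ := aux_divsum ε hε
  refine ⟨C, hC0, ?_⟩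
  intro X α hX
  have hterm : ∀ ℓ : ℕ+, ENNReal.ofReal (((ℓ : ℕ) : ℝ) ^ (ε - 1)) *
      frakM1E (((ℓ : ℕ) : ℝ) * α) (X / ((ℓ : ℕ) : ℝ)) 0
      = ∑' n : ℕ+, ENNReal.ofReal (((ℓ : ℕ) : ℝ) ^ ε * tt α X (ℓ * n)) := by
    intro ℓ
    unfold frakM1E
    rw [← ENNReal.tsum_mul_left]
    exact tsum_congr fun n => term_rescale ε X α ℓ n
  have hinj : Function.Injective (fun p : ℕ+ × ℕ+ => (p.1 * p.2, p.1)) := by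
    intro p q h
    simp only [Prod.mk.injEq] at h
    obtain ⟨h1, h2⟩ := h
    rw [h2] at h1
    exact Prod.ext h2 (mul_left_cancel h1)
  set G : ℕ+ × ℕ+ → ℝ≥0∞ := fun q =>
    if ((q.2 : ℕ) : ℕ) ∣ (q.1 : ℕ) then
      ENNReal.ofReal (((q.2 : ℕ) : ℝ) ^ ε * tt α X q.1) else 0 with hG
  have hinner : ∀ m : ℕ+, (∑' ℓ : ℕ+, G (m, ℓ)) ≤
      ENNReal.ofReal C * ENNReal.ofReal (((m : ℕ) : ℝ) ^ (2 * ε) * tt α X m) := by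
    intro m
    rw [ENNReal.tsum_eq_iSup_sum]
    apply iSup_le
    intro s
    set A := s.filter (fun ℓ : ℕ+ => (ℓ : ℕ) ∣ (m : ℕ)) with hA
    have h1 : ∑ ℓ ∈ s, G (m, ℓ) =
        ∑ ℓ ∈ A, ENNReal.ofReal (((ℓ : ℕ) : ℝ) ^ ε * tt α X m) :=
      (Finset.sum_filter _ _).symm
    have h2 : ∑ ℓ ∈ A, ENNReal.ofReal (((ℓ : ℕ) : ℝ) ^ ε * tt α X m) =
        ENNReal.ofReal (∑ ℓ ∈ A, ((ℓ : ℕ) : ℝ) ^ ε * tt α X m) :=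
      (ENNReal.ofReal_sum_of_nonneg fun ℓ _ =>
        mul_nonneg (Real.rpow_nonneg (by positivity) _) (tt_nonneg α X hX.le m)).symm
    have hsub : A.image (fun ℓ : ℕ+ => (ℓ : ℕ)) ⊆ (m : ℕ).divisors := by
      intro d hd
      simp only [Finset.mem_image, hA, Finset.mem_filter] at hd
      obtain ⟨ℓ, ⟨_, hdvd⟩, rfl⟩ := hd
      exact Nat.mem_divisors.2 ⟨hdvd, m.pos.ne'⟩
    have h3 : ∑ ℓ ∈ A, ((ℓ : ℕ) : ℝ) ^ ε ≤ C * ((m : ℕ) : ℝ) ^ (2 * ε) := by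
      calc ∑ ℓ ∈ A, ((ℓ : ℕ) : ℝ) ^ ε
          = ∑ d ∈ A.image (fun ℓ : ℕ+ => (ℓ : ℕ)), (d : ℝ) ^ ε := by
            rw [Finset.sum_image (fun a _ b _ h => PNat.coe_injective h)]
        _ ≤ ∑ d ∈ (m : ℕ).divisors, (d : ℝ) ^ ε :=
            Finset.sum_le_sum_of_subset_of_nonneg hsub
              (fun d _ _ => Real.rpow_nonneg (by positivity) _)
        _ ≤ C * ((m : ℕ) : ℝ) ^ (2 * ε) := hC (m : ℕ) m.pos.ne'
    rw [h1, h2, ← ENNReal.ofReal_mul hC0.le]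
    apply ENNReal.ofReal_le_ofReal
    calc ∑ ℓ ∈ A, ((ℓ : ℕ) : ℝ) ^ ε * tt α X m
        = (∑ ℓ ∈ A, ((ℓ : ℕ) : ℝ) ^ ε) * tt α X m := by rw [Finset.sum_mul]
      _ ≤ (C * ((m : ℕ) : ℝ) ^ (2 * ε)) * tt α X m :=
          mul_le_mul_of_nonneg_right h3 (tt_nonneg α X hX.le m)
      _ = C * (((m : ℕ) : ℝ) ^ (2 * ε) * tt α X m) := by ring
  calc (∑' l : ℕ+, ENNReal.ofReal (((l : ℕ) : ℝ) ^ (ε - 1)) *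
          frakM1E (((l : ℕ) : ℝ) * α) (X / ((l : ℕ) : ℝ)) 0)
      = ∑' (ℓ : ℕ+) (n : ℕ+), ENNReal.ofReal (((ℓ : ℕ) : ℝ) ^ ε * tt α X (ℓ * n)) :=
        tsum_congr hterm
    _ = ∑' p : ℕ+ × ℕ+, ENNReal.ofReal (((p.1 : ℕ) : ℝ) ^ ε * tt α X (p.1 * p.2)) :=
        (ENNReal.tsum_prod' (f := fun p : ℕ+ × ℕ+ =>
          ENNReal.ofReal (((p.1 : ℕ) : ℝ) ^ ε * tt α X (p.1 * p.2)))).symm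
    _ = ∑' p : ℕ+ × ℕ+, G ((fun p : ℕ+ × ℕ+ => (p.1 * p.2, p.1)) p) := by
        apply tsum_congr
        intro p
        simp only [hG]
        rw [if_pos]
        exact ⟨(p.2 : ℕ), by push_cast; ring⟩
    _ ≤ ∑' q : ℕ+ × ℕ+, G q := ENNReal.tsum_comp_le_tsum_of_injective hinj G
    _ = ∑' (m : ℕ+) (ℓ : ℕ+), G (m, ℓ) := ENNReal.tsum_prod'
    _ ≤ ∑' m : ℕ+, ENNReal.ofReal C *
          ENNReal.ofReal (((m : ℕ) : ℝ) ^ (2 * ε) * tt α X m) :=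
        ENNReal.tsum_le_tsum hinner
    _ = ENNReal.ofReal C * frakM1E α X (2 * ε) := by
        rw [ENNReal.tsum_mul_left, frakM1E_eq]

end
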